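/- arXiv:1802.00284 — 10 statements merged into one kernel-verified Lean document; each statement's English description precedes it below -/
import Mathlib

section
/- Incremental asymptotic stability under strict passivity: let A ∈ ℝ^{n×n}, B ∈ ℝ^{n×m}, C ∈ ℝ^{m×n}, let γ > 0, and let P ∈ ℝ^{n×n} be symmetric positive definite with AᵀP + PA + 2γP ⪯ 0 and PB = Cᵀ, and let R ⊆ ℝ^m × ℝ^m be an incrementally passive relation. Let v ∈ ℝ^m be constant, and let x₁, x₂ : [0,∞) → ℝ^n be differentiable and u₁, u₂ : [0,∞) → ℝ^m be such that for all t ≥ 0 and i = 1,2: ẋᵢ(t) = A xᵢ(t) − B uᵢ(t) + B v and (C xᵢ(t), uᵢ(t)) ∈ R. Then ‖x₁(t) − x₂(t)‖ ≤ √(λ_max(P)/λ_min(P)) e^{−γ t} ‖x₁(0) − x₂(0)‖ for all t ≥ 0; in particular lim_{t→∞} ‖x₁(t) − x₂(t)‖ = 0. -/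
open Matrix

lemma quad_repr {n : ℕ} (P : Matrix (Fin n) (Fin n) ℝ) (hP : P.IsHermitian)
    (y : EuclideanSpace ℝ (Fin n)) :
    (fun i => y i) ⬝ᵥ P *ᵥ (fun i => y i) =
      ∑ i, hP.eigenvalues i * (inner ℝ (hP.eigenvectorBasis i) y : ℝ)^2 := by
  have hsymm := Matrix.isHermitian_iff_isSymmetric.1 hP
  have h1 : (fun i => y i) ⬝ᵥ P *ᵥ (fun i => y i)
      = (inner ℝ y (Matrix.toEuclideanLin P y) : ℝ) := by
    rw [Matrix.toEuclideanLin_apply]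
    simp [PiLp.inner_apply, RCLike.inner_apply, dotProduct, mul_comm]
  rw [h1, ← OrthonormalBasis.sum_inner_mul_inner (hP.eigenvectorBasis)]
  congr 1
  funext i
  have h2 : (inner ℝ (hP.eigenvectorBasis i) (Matrix.toEuclideanLin P y) : ℝ)
      = hP.eigenvalues i * inner ℝ (hP.eigenvectorBasis i) y := by
    rw [← hsymm (hP.eigenvectorBasis i) y]
    have h3 : Matrix.toEuclideanLin P (hP.eigenvectorBasis i)
        = (hP.eigenvalues i : ℝ) • hP.eigenvectorBasis i := by
      apply (WithLp.equiv 2 _).injective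
      ext j
      have := hP.mulVec_eigenvectorBasis i
      rw [Matrix.toEuclideanLin_apply]
      simpa using congrFun this j
    rw [h3, inner_smul_left]
    simp
  rw [h2]
  have : (inner ℝ y (hP.eigenvectorBasis i) : ℝ) = inner ℝ (hP.eigenvectorBasis i) y :=
    real_inner_comm _ _
  rw [this]; ring

lemma norm_repr {n : ℕ} (P : Matrix (Fin n) (Fin n) ℝ) (hP : P.IsHermitian)
    (y : EuclideanSpace ℝ (Fin n)) :
    ‖y‖^2 = ∑ i, (inner ℝ (hP.eigenvectorBasis i) y : ℝ)^2 := by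
  have := OrthonormalBasis.sum_inner_mul_inner (hP.eigenvectorBasis) y y
  rw [← real_inner_self_eq_norm_sq, ← this]
  congr 1; funext i
  rw [real_inner_comm y]; ring

lemma quad_upper {n : ℕ} [Nonempty (Fin n)] (P : Matrix (Fin n) (Fin n) ℝ)
    (hP : P.IsHermitian) (y : EuclideanSpace ℝ (Fin n)) :
    (fun i => y i) ⬝ᵥ P *ᵥ (fun i => y i) ≤ (⨆ i, hP.eigenvalues i) * ‖y‖ ^ 2 := by
  rw [quad_repr P hP y, norm_repr P hP y, Finset.mul_sum]
  apply Finset.sum_le_sum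
  intro i _
  have h1 : hP.eigenvalues i ≤ ⨆ i, hP.eigenvalues i :=
    le_ciSup (Set.Finite.bddAbove (Set.finite_range _)) i
  nlinarith [sq_nonneg (inner ℝ (hP.eigenvectorBasis i) y : ℝ)]

lemma quad_lower {n : ℕ} [Nonempty (Fin n)] (P : Matrix (Fin n) (Fin n) ℝ)
    (hP : P.IsHermitian) (y : EuclideanSpace ℝ (Fin n)) :
    (⨅ i, hP.eigenvalues i) * ‖y‖ ^ 2 ≤ (fun i => y i) ⬝ᵥ P *ᵥ (fun i => y i) := by
  rw [quad_repr P hP y, norm_repr P hP y, Finset.mul_sum]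
  apply Finset.sum_le_sum
  intro i _
  have h1 : (⨅ i, hP.eigenvalues i) ≤ hP.eigenvalues i :=
    ciInf_le (Set.Finite.bddBelow (Set.finite_range _)) i
  nlinarith [sq_nonneg (inner ℝ (hP.eigenvectorBasis i) y : ℝ)]

lemma key_ineq {n m : ℕ} (A : Matrix (Fin n) (Fin n) ℝ) (B : Matrix (Fin n) (Fin m) ℝ)
    (C : Matrix (Fin m) (Fin n) ℝ) (γ : ℝ) (P : Matrix (Fin n) (Fin n) ℝ)
    (hPsymm : P.IsSymm) (hA : (-(Aᵀ * P + P * A + (2 * γ) • P)).PosSemidef)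
    (hPB : P * B = Cᵀ) (yt : Fin n → ℝ) (wt : Fin m → ℝ)
    (hpass : 0 ≤ (C *ᵥ yt) ⬝ᵥ wt) :
    (A *ᵥ yt - B *ᵥ wt) ⬝ᵥ P *ᵥ yt + yt ⬝ᵥ P *ᵥ (A *ᵥ yt - B *ᵥ wt)
      ≤ -(2*γ) * (yt ⬝ᵥ P *ᵥ yt) := by
  have hBtP : Bᵀ * P = C := by
    have h : Bᵀ * Pᵀ = C := by
      rw [← Matrix.transpose_mul, hPB, Matrix.transpose_transpose]
    rwa [hPsymm] at h
  have hq : yt ⬝ᵥ ((Aᵀ * P + P * A + (2 * γ) • P) *ᵥ yt) ≤ 0 := by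
    have h := hA.dotProduct_mulVec_nonneg yt
    simp only [Matrix.neg_mulVec, dotProduct_neg, star_trivial] at h
    linarith
  have hq' : yt ⬝ᵥ ((Aᵀ * P) *ᵥ yt) + yt ⬝ᵥ ((P * A) *ᵥ yt)
      + (2*γ) * (yt ⬝ᵥ (P *ᵥ yt)) ≤ 0 := by
    have hexp : yt ⬝ᵥ ((Aᵀ * P + P * A + (2 * γ) • P) *ᵥ yt)
        = yt ⬝ᵥ ((Aᵀ * P) *ᵥ yt) + yt ⬝ᵥ ((P * A) *ᵥ yt)
          + (2*γ) * (yt ⬝ᵥ (P *ᵥ yt)) := by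
      rw [Matrix.add_mulVec, Matrix.add_mulVec, Matrix.smul_mulVec,
        dotProduct_add, dotProduct_add, dotProduct_smul]
      simp [smul_eq_mul]
    linarith [hexp ▸ hq]
  have h1 : (A *ᵥ yt) ⬝ᵥ (P *ᵥ yt) = yt ⬝ᵥ ((Aᵀ * P) *ᵥ yt) := by
    rw [← Matrix.mulVec_mulVec, Matrix.dotProduct_mulVec yt Aᵀ, Matrix.vecMul_transpose]
  have h2 : (B *ᵥ wt) ⬝ᵥ (P *ᵥ yt) = (C *ᵥ yt) ⬝ᵥ wt := by
    rw [← Matrix.vecMul_transpose, ← Matrix.dotProduct_mulVec, Matrix.mulVec_mulVec, hBtP,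
      dotProduct_comm]
  have h3 : yt ⬝ᵥ (P *ᵥ (A *ᵥ yt)) = yt ⬝ᵥ ((P * A) *ᵥ yt) := by
    rw [Matrix.mulVec_mulVec]
  have h4 : yt ⬝ᵥ (P *ᵥ (B *ᵥ wt)) = (C *ᵥ yt) ⬝ᵥ wt := by
    rw [Matrix.mulVec_mulVec, hPB, Matrix.dotProduct_mulVec, Matrix.vecMul_transpose]
  rw [sub_dotProduct, Matrix.mulVec_sub, dotProduct_sub, h1, h2, h3, h4]
  linarith

/-- Incremental asymptotic stability under strict passivity: if `P = Pᵀ ≻ 0`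
satisfies `AᵀP + PA + 2γP ⪯ 0` (with `γ > 0`) and `PB = Cᵀ`, and `R` is an
incrementally passive relation, then for any two closed-loop trajectories
`‖Δx(t)‖ ≤ √(λmax(P)/λmin(P)) e^{−γt} ‖Δx(0)‖`, so `‖Δx(t)‖ → 0` as `t → ∞`. -/
theorem closed_loop_incremental_asymptotic_stability
    (n m : ℕ) (A : Matrix (Fin n) (Fin n) ℝ) (B : Matrix (Fin n) (Fin m) ℝ)
    (C : Matrix (Fin m) (Fin n) ℝ) (γ : ℝ) (hγ : 0 < γ)
    (P : Matrix (Fin n) (Fin n) ℝ) (hPsymm : P.IsSymm) (hPpos : P.PosDef)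
    (hA : (-(Aᵀ * P + P * A + (2 * γ) • P)).PosSemidef) (hPB : P * B = Cᵀ)
    (R : Set ((Fin m → ℝ) × (Fin m → ℝ)))
    (hR : ∀ p ∈ R, ∀ q ∈ R, 0 ≤ (p.1 - q.1) ⬝ᵥ (p.2 - q.2))
    (v : Fin m → ℝ)
    (x₁ x₂ : ℝ → EuclideanSpace ℝ (Fin n)) (u₁ u₂ : ℝ → (Fin m → ℝ))
    (hx₁ : ∀ t ≥ (0:ℝ), HasDerivAt x₁
      (WithLp.toLp 2 (A.mulVec (x₁ t) - B.mulVec (u₁ t) + B.mulVec v : Fin n → ℝ) :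
        EuclideanSpace ℝ (Fin n)) t)
    (hx₂ : ∀ t ≥ (0:ℝ), HasDerivAt x₂
      (WithLp.toLp 2 (A.mulVec (x₂ t) - B.mulVec (u₂ t) + B.mulVec v : Fin n → ℝ) :
        EuclideanSpace ℝ (Fin n)) t)
    (hR₁ : ∀ t ≥ (0:ℝ), (C.mulVec (x₁ t), u₁ t) ∈ R)
    (hR₂ : ∀ t ≥ (0:ℝ), (C.mulVec (x₂ t), u₂ t) ∈ R) :
    (∀ t ≥ (0:ℝ),
      ‖x₁ t - x₂ t‖ ≤
        Real.sqrt ((⨆ i, hPpos.1.eigenvalues i) / (⨅ i, hPpos.1.eigenvalues i)) *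
          Real.exp (-γ * t) * ‖x₁ 0 - x₂ 0‖) ∧
    Filter.Tendsto (fun t => ‖x₁ t - x₂ t‖) Filter.atTop (nhds 0) := by
  classical
  -- the bound suffices, tendsto follows from squeezing
  suffices hmain : ∀ t ≥ (0:ℝ),
      ‖x₁ t - x₂ t‖ ≤
        Real.sqrt ((⨆ i, hPpos.1.eigenvalues i) / (⨅ i, hPpos.1.eigenvalues i)) *
          Real.exp (-γ * t) * ‖x₁ 0 - x₂ 0‖ by
    refine ⟨hmain, ?_⟩
    apply squeeze_zero' (Filter.Eventually.of_forall fun t => norm_nonneg _)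
      ((Filter.eventually_ge_atTop (0:ℝ)).mono fun t ht => hmain t ht)
    have h1 : Filter.Tendsto (fun t : ℝ => Real.exp (-γ * t)) Filter.atTop (nhds 0) := by
      have h2 : Filter.Tendsto (fun t : ℝ => γ * t) Filter.atTop Filter.atTop :=
        Filter.Tendsto.const_mul_atTop hγ Filter.tendsto_id
      have := Real.tendsto_exp_neg_atTop_nhds_zero.comp h2
      simpa [Function.comp_def, neg_mul] using this
    have := (h1.const_mul
      (Real.sqrt ((⨆ i, hPpos.1.eigenvalues i) / (⨅ i, hPpos.1.eigenvalues i)))).mul_const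
      ‖x₁ 0 - x₂ 0‖
    simpa using this
  rcases Nat.eq_zero_or_pos n with hn0 | hn
  · subst hn0
    intro t ht
    have h0 : ∀ s : ℝ, x₁ s - x₂ s = 0 := fun s => Subsingleton.elim _ _
    rw [h0 t, h0 0]
    simp
  haveI : Nonempty (Fin n) := ⟨⟨0, hn⟩⟩
  set lmax := ⨆ i, hPpos.1.eigenvalues i with hlmax_def
  set lmin := ⨅ i, hPpos.1.eigenvalues i with hlmin_def
  have hlmin_pos : 0 < lmin := by
    obtain ⟨i, hi⟩ := exists_eq_ciInf_of_finite (f := hPpos.1.eigenvalues)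
    rw [hlmin_def, ← hi]
    exact hPpos.eigenvalues_pos i
  have hlmax_pos : 0 < lmax := by
    have h1 : hPpos.1.eigenvalues (Classical.arbitrary _) ≤ lmax :=
      le_ciSup (Set.Finite.bddAbove (Set.finite_range _)) _
    exact lt_of_lt_of_le (hPpos.eigenvalues_pos _) h1
  set y : ℝ → EuclideanSpace ℝ (Fin n) := fun t => x₁ t - x₂ t with hy_def
  set w : ℝ → Fin m → ℝ := fun t => u₁ t - u₂ t with hw_def
  set d : ℝ → Fin n → ℝ := fun t => A *ᵥ (fun i => y t i) - B *ᵥ w t with hd_def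
  have hy : ∀ t ≥ (0:ℝ), HasDerivAt y (WithLp.toLp 2 (d t : Fin n → ℝ) : EuclideanSpace ℝ (Fin n)) t := by
    intro t ht
    have h : HasDerivAt y _ t := (hx₁ t ht).sub (hx₂ t ht)
    convert h using 1
    ext i
    simp [hd_def, hw_def, hy_def, Matrix.mulVec, dotProduct, mul_sub,
      Finset.sum_sub_distrib, PiLp.sub_apply]
    ring
  have hyc : ∀ t ≥ (0:ℝ), ∀ i, HasDerivAt (fun s => y s i) (d t i) t := by
    intro t ht i
    have hL := (EuclideanSpace.proj i (𝕜 := ℝ)).hasFDerivAt.comp_hasDerivAt t (hy t ht)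
    simpa [Function.comp_def] using hL
  set V : ℝ → ℝ := fun s => (fun i => y s i) ⬝ᵥ P *ᵥ (fun i => y s i) with hV_def
  have hVderiv : ∀ t ≥ (0:ℝ), HasDerivAt V
      (d t ⬝ᵥ P *ᵥ (fun i => y t i) + (fun i => y t i) ⬝ᵥ P *ᵥ d t) t := by
    intro t ht
    have h : HasDerivAt (fun s => ∑ i, ∑ j, y s i * (P i j * y s j))
        (∑ i, ∑ j, (d t i * (P i j * y t j) + y t i * (P i j * d t j))) t :=
      HasDerivAt.fun_sum (fun i _ => HasDerivAt.fun_sum (fun j _ =>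
        ((hyc t ht i).mul ((hyc t ht j).const_mul (P i j)))))
    convert h using 1
    · funext s
      simp [hV_def, dotProduct, Matrix.mulVec, Finset.mul_sum]
    · simp [dotProduct, Matrix.mulVec, Finset.mul_sum, Finset.sum_add_distrib]
  have hBtP : Bᵀ * P = C := by
    have : Bᵀ * Pᵀ = C := by
      rw [← Matrix.transpose_mul, hPB, Matrix.transpose_transpose]
    rwa [hPsymm] at this
  have hkey : ∀ t ≥ (0:ℝ),
      d t ⬝ᵥ P *ᵥ (fun i => y t i) + (fun i => y t i) ⬝ᵥ P *ᵥ d t ≤ -(2*γ) * V t := by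
    intro t ht
    have hpass : 0 ≤ (C *ᵥ (fun i => y t i)) ⬝ᵥ w t := by
      have h := hR _ (hR₁ t ht) _ (hR₂ t ht)
      have he : C *ᵥ (fun i => y t i) = C.mulVec (x₁ t) - C.mulVec (x₂ t) := by
        funext k
        simp [hy_def, Matrix.mulVec, dotProduct, mul_sub,
          Finset.sum_sub_distrib, PiLp.sub_apply]
      rw [he]
      exact h
    exact key_ineq A B C γ P hPsymm hA hPB _ _ hpass
  set W : ℝ → ℝ := fun s => Real.exp (2*γ*s) * V s with hW_def
  have hWderiv : ∀ t ≥ (0:ℝ), HasDerivAt W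
      (Real.exp (2*γ*t) * (2*γ) * V t +
        Real.exp (2*γ*t) * (d t ⬝ᵥ P *ᵥ (fun i => y t i) + (fun i => y t i) ⬝ᵥ P *ᵥ d t)) t := by
    intro t ht
    have he : HasDerivAt (fun s : ℝ => Real.exp (2*γ*s)) (Real.exp (2*γ*t) * (2*γ)) t := by
      have : HasDerivAt (fun s : ℝ => 2*γ*s) (2*γ) t := by
        simpa using (hasDerivAt_id t).const_mul (2*γ)
      exact this.exp
    exact he.mul (hVderiv t ht)
  have hanti : AntitoneOn W (Set.Ici 0) := by
    apply antitoneOn_of_deriv_nonpos (convex_Ici 0)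
    · intro t ht
      exact ((hWderiv t ht).continuousAt).continuousWithinAt
    · intro t ht
      rw [interior_Ici] at ht
      exact (hWderiv t (le_of_lt ht)).differentiableAt.differentiableWithinAt
    · intro t ht
      rw [interior_Ici] at ht
      rw [(hWderiv t (le_of_lt ht)).deriv]
      have h1 := hkey t (le_of_lt ht)
      have h2 := Real.exp_pos (2*γ*t)
      nlinarith
  have hVbound : ∀ t ≥ (0:ℝ), V t ≤ Real.exp (-(2*γ)*t) * V 0 := by
    intro t ht
    have h1 : W t ≤ W 0 := hanti Set.self_mem_Ici ht ht
    have h2 : Real.exp (2*γ*t) * V t ≤ V 0 := by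
      simpa [hW_def, Real.exp_zero] using h1
    have h3 := Real.exp_pos (2*γ*t)
    rw [show (-(2*γ)*t) = -(2*γ*t) by ring, Real.exp_neg]
    calc V t = (Real.exp (2*γ*t) * V t) / Real.exp (2*γ*t) := by field_simp
      _ ≤ V 0 / Real.exp (2*γ*t) := by
          gcongr
      _ = (Real.exp (2*γ*t))⁻¹ * V 0 := by ring
  intro t ht
  have hlow := quad_lower P hPpos.1 (y t)
  have hup := quad_upper P hPpos.1 (y 0)
  have hsq : ‖y t‖^2 ≤ lmax / lmin * Real.exp (-(2*γ)*t) * ‖y 0‖^2 := by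
    have hb := hVbound t ht
    have hVt : V t = (fun i => y t i) ⬝ᵥ P *ᵥ (fun i => y t i) := rfl
    have hV0 : V 0 = (fun i => y 0 i) ⬝ᵥ P *ᵥ (fun i => y 0 i) := rfl
    have hexp := Real.exp_pos (-(2*γ)*t)
    have hchain : lmin * ‖y t‖^2 ≤ Real.exp (-(2*γ)*t) * (lmax * ‖y 0‖^2) := by
      calc lmin * ‖y t‖^2 ≤ V t := hlow
        _ ≤ Real.exp (-(2*γ)*t) * V 0 := hb
        _ ≤ Real.exp (-(2*γ)*t) * (lmax * ‖y 0‖^2) :=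
            mul_le_mul_of_nonneg_left hup (le_of_lt hexp)
    rw [div_mul_eq_mul_div, div_mul_eq_mul_div, le_div_iff₀ hlmin_pos]
    nlinarith
  have hnorm_eq : ‖x₁ t - x₂ t‖ = ‖y t‖ := rfl
  have hnorm0_eq : ‖x₁ 0 - x₂ 0‖ = ‖y 0‖ := rfl
  rw [hnorm_eq, hnorm0_eq]
  have hRHS_nonneg : 0 ≤ Real.sqrt (lmax / lmin) * Real.exp (-γ*t) * ‖y 0‖ := by
    positivity
  have hsqrt : ‖y t‖ = Real.sqrt (‖y t‖^2) := (Real.sqrt_sq (norm_nonneg _)).symm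
  rw [hsqrt]
  have hstep : Real.sqrt (‖y t‖^2) ≤ Real.sqrt (lmax / lmin * Real.exp (-(2*γ)*t) * ‖y 0‖^2) :=
    Real.sqrt_le_sqrt hsq
  refine le_trans hstep (le_of_eq ?_)
  have he2 : Real.exp (-(2*γ)*t) = (Real.exp (-γ*t))^2 := by
    rw [sq, ← Real.exp_add]; ring_nf
  rw [he2, Real.sqrt_mul (by positivity), Real.sqrt_mul (by positivity),
    Real.sqrt_sq (le_of_lt (Real.exp_pos _)), Real.sqrt_sq (norm_nonneg _)]
end

section
/- Injectivity of the dominant projection: let P ∈ ℝ^{n×n} be symmetric, let H and V be subspaces of ℝ^n with ℝ^n = H ⊕ V, and suppose zᵀPz > 0 for every nonzero z ∈ V. Let Π : ℝ^n → ℝ^n be the linear projection onto H along V. If S ⊆ ℝ^n is a set such that (x̄₁ − x̄₂)ᵀ P (x̄₁ − x̄₂) < 0 for every pair of distinct points x̄₁, x̄₂ ∈ S, then the restriction of Π to S is injective. -/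
open Matrix

/-- Injectivity of the dominant projection: let `P` be symmetric, `ℝⁿ = H ⊕ V`,
with `zᵀPz > 0` for all nonzero `z ∈ V`, and let `Π` be the projection onto `H`
along `V`. If on a set `S` every increment of distinct points satisfies
`(Δx̄)ᵀ P Δx̄ < 0`, then `Π` restricted to `S` is injective. -/
theorem dominant_projection_injective
    (n : ℕ) (P : Matrix (Fin n) (Fin n) ℝ) (hPsymm : P.IsSymm)
    (H V : Submodule ℝ (Fin n → ℝ)) (hHV : IsCompl H V)
    (hVpos : ∀ z ∈ V, z ≠ 0 → 0 < z ⬝ᵥ P.mulVec z)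
    (proj : (Fin n → ℝ) →ₗ[ℝ] (Fin n → ℝ))
    (hproj : ∀ x, proj x ∈ H ∧ x - proj x ∈ V)
    (S : Set (Fin n → ℝ))
    (hS : ∀ x₁ ∈ S, ∀ x₂ ∈ S, x₁ ≠ x₂ → (x₁ - x₂) ⬝ᵥ P.mulVec (x₁ - x₂) < 0) :
    Set.InjOn proj S := by
  intro x₁ hx₁ x₂ hx₂ hpe
  by_contra hne
  have hdV : x₁ - x₂ ∈ V := by
    have := V.sub_mem (hproj x₁).2 (hproj x₂).2
    have heq : (x₁ - proj x₁) - (x₂ - proj x₂) = x₁ - x₂ := by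
      rw [hpe]; abel
    rwa [heq] at this
  have hd0 : x₁ - x₂ ≠ 0 := sub_ne_zero.mpr hne
  exact absurd (hVpos _ hdV hd0) (not_lt.mpr (hS x₁ hx₁ x₂ hx₂ hne).le)
end

section
/- Interconnection of p-dissipative systems (pointwise form): for i = 1,2, let Pᵢ ∈ ℝ^{nᵢ×nᵢ} be symmetric, γ ≥ 0, εᵢ ≥ 0, and let Qᵢ, Lᵢ, Rᵢ ∈ ℝ^{m×m} with Qᵢ, Rᵢ symmetric. Suppose vectors Δẋⁱ, Δxⁱ ∈ ℝ^{nᵢ} and Δuⁱ, Δyⁱ ∈ ℝ^m satisfy, for i = 1,2, the dissipation inequality 2 (Δẋⁱ)ᵀ Pᵢ Δxⁱ + (Δxⁱ)ᵀ (2γPᵢ + εᵢ I) Δxⁱ ≤ [Δyⁱ; Δuⁱ]ᵀ [[Qᵢ, Lᵢ],[Lᵢᵀ, Rᵢ]] [Δyⁱ; Δuⁱ], together with the negative feedback interconnection Δu¹ = −Δy² + Δv¹, Δu² = Δy¹ + Δv². Then, with P = blockdiag(P₁, P₂), Δx = [Δx¹; Δx²], Δẋ = [Δẋ¹; Δẋ²],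 Δy = [Δy¹; Δy²], Δv = [Δv¹; Δv²], and ε = min{ε₁, ε₂}, one has 2 Δẋᵀ P Δx + Δxᵀ (2γP + εI) Δx ≤ [Δy; Δv]ᵀ M [Δy; Δv], where M is the block matrix [[Q₁ + R₂, −L₁ + L₂ᵀ, L₁, R₂], [−L₁ᵀ + L₂, Q₂ + R₁, −R₁, L₂], [L₁ᵀ, −R₁ᵀ, R₁, 0], [R₂, L₂ᵀ, 0, R₂]]. -/
open Matrix

private lemma dot_self_nonneg' {n : ℕ} (v : Fin n → ℝ) : 0 ≤ v ⬝ᵥ v :=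
  Finset.sum_nonneg fun i _ => mul_self_nonneg _

private lemma swap_dot {m : ℕ} (A : Matrix (Fin m) (Fin m) ℝ) (x y : Fin m → ℝ) :
    x ⬝ᵥ Aᵀ.mulVec y = y ⬝ᵥ A.mulVec x := by
  rw [Matrix.mulVec_transpose, dotProduct_comm, ← Matrix.dotProduct_mulVec]

private lemma swap_symm {m : ℕ} {A : Matrix (Fin m) (Fin m) ℝ} (hA : A.IsSymm)
    (x y : Fin m → ℝ) : x ⬝ᵥ A.mulVec y = y ⬝ᵥ A.mulVec x := by
  conv_lhs => rw [← hA.eq]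
  exact swap_dot A x y


/-- Interconnection of p-dissipative systems (pointwise form): if each system
satisfies its incremental dissipation inequality with common rate `γ`, and the
systems are interconnected in negative feedback `Δu¹ = −Δy² + Δv¹`,
`Δu² = Δy¹ + Δv²`, then the interconnection satisfies the incremental
dissipation inequality with storage `blockdiag(P₁,P₂)`, `ε = min{ε₁,ε₂}` and
the aggregate supply matrix `M`. -/
theorem interconnection_p_dissipative
    (n₁ n₂ m : ℕ)
    (P₁ : Matrix (Fin n₁) (Fin n₁) ℝ) (hP₁ : P₁.IsSymm)
    (P₂ : Matrix (Fin n₂) (Fin n₂) ℝ) (hP₂ : P₂.IsSymm)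
    (γ : ℝ) (hγ : 0 ≤ γ) (ε₁ ε₂ : ℝ) (hε₁ : 0 ≤ ε₁) (hε₂ : 0 ≤ ε₂)
    (Q₁ L₁ R₁ Q₂ L₂ R₂ : Matrix (Fin m) (Fin m) ℝ)
    (hQ₁ : Q₁.IsSymm) (hR₁ : R₁.IsSymm) (hQ₂ : Q₂.IsSymm) (hR₂ : R₂.IsSymm)
    (Δxdot₁ Δx₁ : Fin n₁ → ℝ) (Δxdot₂ Δx₂ : Fin n₂ → ℝ)
    (Δu₁ Δy₁ Δu₂ Δy₂ Δv₁ Δv₂ : Fin m → ℝ)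
    (hdiss₁ : 2 * (Δxdot₁ ⬝ᵥ P₁.mulVec Δx₁) + Δx₁ ⬝ᵥ ((2 * γ) • P₁ + ε₁ • 1).mulVec Δx₁ ≤
      (Sum.elim Δy₁ Δu₁) ⬝ᵥ (Matrix.fromBlocks Q₁ L₁ L₁ᵀ R₁).mulVec (Sum.elim Δy₁ Δu₁))
    (hdiss₂ : 2 * (Δxdot₂ ⬝ᵥ P₂.mulVec Δx₂) + Δx₂ ⬝ᵥ ((2 * γ) • P₂ + ε₂ • 1).mulVec Δx₂ ≤
      (Sum.elim Δy₂ Δu₂) ⬝ᵥ (Matrix.fromBlocks Q₂ L₂ L₂ᵀ R₂).mulVec (Sum.elim Δy₂ Δu₂))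
    (hint₁ : Δu₁ = -Δy₂ + Δv₁) (hint₂ : Δu₂ = Δy₁ + Δv₂) :
    2 * ((Sum.elim Δxdot₁ Δxdot₂) ⬝ᵥ (Matrix.fromBlocks P₁ 0 0 P₂).mulVec (Sum.elim Δx₁ Δx₂)) +
      (Sum.elim Δx₁ Δx₂) ⬝ᵥ
        ((2 * γ) • (Matrix.fromBlocks P₁ 0 0 P₂) + (min ε₁ ε₂) • 1).mulVec
          (Sum.elim Δx₁ Δx₂) ≤
      (Sum.elim (Sum.elim Δy₁ Δy₂) (Sum.elim Δv₁ Δv₂)) ⬝ᵥ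
        (Matrix.fromBlocks
          (Matrix.fromBlocks (Q₁ + R₂) (-L₁ + L₂ᵀ) (-L₁ᵀ + L₂) (Q₂ + R₁))
          (Matrix.fromBlocks L₁ R₂ (-R₁) L₂)
          (Matrix.fromBlocks L₁ᵀ (-R₁ᵀ) R₂ L₂ᵀ)
          (Matrix.fromBlocks R₁ 0 0 R₂)).mulVec
        (Sum.elim (Sum.elim Δy₁ Δy₂) (Sum.elim Δv₁ Δv₂)) := by
  subst hint₁ hint₂
  have hm1 : min ε₁ ε₂ * (Δx₁ ⬝ᵥ Δx₁) ≤ ε₁ * (Δx₁ ⬝ᵥ Δx₁) :=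
    mul_le_mul_of_nonneg_right (min_le_left _ _) (dot_self_nonneg' _)
  have hm2 : min ε₁ ε₂ * (Δx₂ ⬝ᵥ Δx₂) ≤ ε₂ * (Δx₂ ⬝ᵥ Δx₂) :=
    mul_le_mul_of_nonneg_right (min_le_right _ _) (dot_self_nonneg' _)
  simp only [Matrix.fromBlocks_mulVec, sumElim_dotProduct_sumElim,
    Matrix.add_mulVec, Matrix.smul_mulVec, Matrix.one_mulVec,
    Matrix.zero_mulVec, Matrix.neg_mulVec, Matrix.mulVec_add, Matrix.mulVec_neg,
    dotProduct_add, add_dotProduct, dotProduct_neg, neg_dotProduct,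
    Sum.elim_comp_inl, Sum.elim_comp_inr, dotProduct_smul, smul_eq_mul, add_zero, zero_add, Matrix.mulVec_zero,
    hQ₁.eq, hR₁.eq, hQ₂.eq, hR₂.eq, swap_dot, mul_add, mul_neg]
    at hdiss₁ hdiss₂ ⊢
  linarith [hm1, hm2, hdiss₁, hdiss₂,
    swap_symm hR₁ Δy₂ Δv₁, swap_symm hR₂ Δy₁ Δv₂,
    swap_symm hR₁ Δy₂ Δy₂, swap_symm hR₂ Δy₁ Δy₁,
    swap_symm hR₁ Δv₁ Δv₁, swap_symm hR₂ Δv₂ Δv₂]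
end

section
/- Dominance of the interconnection: under the hypotheses of the interconnection theorem (for i = 1,2, symmetric Pᵢ ∈ ℝ^{nᵢ×nᵢ}, γ ≥ 0, εᵢ ≥ 0, supply matrices Qᵢ, Lᵢ, Rᵢ ∈ ℝ^{m×m} with Qᵢ, Rᵢ symmetric, and vectors Δẋⁱ, Δxⁱ, Δuⁱ, Δyⁱ satisfying the two dissipation inequalities 2 (Δẋⁱ)ᵀ Pᵢ Δxⁱ + (Δxⁱ)ᵀ (2γPᵢ + εᵢ I) Δxⁱ ≤ [Δyⁱ; Δuⁱ]ᵀ [[Qᵢ, Lᵢ],[Lᵢᵀ, Rᵢ]] [Δyⁱ; Δuⁱ] and the interconnection Δu¹ = −Δy², Δu² = Δy¹ with zero external inputs), if moreover the matrix [[Q₁ + R₂, −L₁ + L₂ᵀ], [−L₁ᵀ + L₂, Q₂ + R₁]] is negative semidefinite, then with P = blockdiag(P₁, P₂) and ε = min{ε₁, ε₂}: 2 Δẋᵀ P Δx + Δxᵀ(2γP + εI)Δx ≤ 0, where Δx = [Δx¹; Δx²] and Δẋ = [Δẋ¹; Δẋ²]. -/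
open Matrix

/-- Dominance of the interconnection: under the hypotheses of the
interconnection theorem, with zero external inputs (`Δu¹ = −Δy²`, `Δu² = Δy¹`)
and assuming `[[Q₁ + R₂, −L₁ + L₂ᵀ], [−L₁ᵀ + L₂, Q₂ + R₁]] ⪯ 0`, the combined
increment satisfies the dominance inequality
`2 Δẋᵀ P Δx + Δxᵀ(2γP + εI)Δx ≤ 0` with `P = blockdiag(P₁,P₂)`,
`ε = min{ε₁,ε₂}`. -/
theorem interconnection_dominance
    (n₁ n₂ m : ℕ)
    (P₁ : Matrix (Fin n₁) (Fin n₁) ℝ) (hP₁ : P₁.IsSymm)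
    (P₂ : Matrix (Fin n₂) (Fin n₂) ℝ) (hP₂ : P₂.IsSymm)
    (γ : ℝ) (hγ : 0 ≤ γ) (ε₁ ε₂ : ℝ) (hε₁ : 0 ≤ ε₁) (hε₂ : 0 ≤ ε₂)
    (Q₁ L₁ R₁ Q₂ L₂ R₂ : Matrix (Fin m) (Fin m) ℝ)
    (hQ₁ : Q₁.IsSymm) (hR₁ : R₁.IsSymm) (hQ₂ : Q₂.IsSymm) (hR₂ : R₂.IsSymm)
    (Δxdot₁ Δx₁ : Fin n₁ → ℝ) (Δxdot₂ Δx₂ : Fin n₂ → ℝ)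
    (Δu₁ Δy₁ Δu₂ Δy₂ : Fin m → ℝ)
    (hdiss₁ : 2 * (Δxdot₁ ⬝ᵥ P₁.mulVec Δx₁) + Δx₁ ⬝ᵥ ((2 * γ) • P₁ + ε₁ • 1).mulVec Δx₁ ≤
      (Sum.elim Δy₁ Δu₁) ⬝ᵥ (Matrix.fromBlocks Q₁ L₁ L₁ᵀ R₁).mulVec (Sum.elim Δy₁ Δu₁))
    (hdiss₂ : 2 * (Δxdot₂ ⬝ᵥ P₂.mulVec Δx₂) + Δx₂ ⬝ᵥ ((2 * γ) • P₂ + ε₂ • 1).mulVec Δx₂ ≤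
      (Sum.elim Δy₂ Δu₂) ⬝ᵥ (Matrix.fromBlocks Q₂ L₂ L₂ᵀ R₂).mulVec (Sum.elim Δy₂ Δu₂))
    (hint₁ : Δu₁ = -Δy₂) (hint₂ : Δu₂ = Δy₁)
    (hsupply : (-(Matrix.fromBlocks (Q₁ + R₂) (-L₁ + L₂ᵀ) (-L₁ᵀ + L₂) (Q₂ + R₁))).PosSemidef) :
    2 * ((Sum.elim Δxdot₁ Δxdot₂) ⬝ᵥ
        (Matrix.fromBlocks P₁ 0 0 P₂).mulVec (Sum.elim Δx₁ Δx₂)) +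
      (Sum.elim Δx₁ Δx₂) ⬝ᵥ
        ((2 * γ) • (Matrix.fromBlocks P₁ 0 0 P₂) + (min ε₁ ε₂) • 1).mulVec
          (Sum.elim Δx₁ Δx₂) ≤ 0 := by
  subst hint₁ hint₂
  have hz := hsupply.dotProduct_mulVec_nonneg (Sum.elim Δu₂ Δy₂)
  have htr : ∀ (A : Matrix (Fin m) (Fin m) ℝ) (x y : Fin m → ℝ),
      x ⬝ᵥ Aᵀ *ᵥ y = y ⬝ᵥ A *ᵥ x := by
    intro A x y
    rw [Matrix.dotProduct_mulVec, Matrix.vecMul_transpose, dotProduct_comm]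
  have hx1 : (0:ℝ) ≤ Δx₁ ⬝ᵥ Δx₁ := Finset.sum_nonneg fun i _ => mul_self_nonneg _
  have hx2 : (0:ℝ) ≤ Δx₂ ⬝ᵥ Δx₂ := Finset.sum_nonneg fun i _ => mul_self_nonneg _
  simp only [star_trivial, Matrix.neg_mulVec, dotProduct_neg, neg_dotProduct,
    Matrix.fromBlocks_mulVec, Matrix.add_mulVec, Matrix.smul_mulVec,
    Matrix.one_mulVec, sumElim_dotProduct_sumElim, dotProduct_add,
    dotProduct_smul, Matrix.zero_mulVec, Matrix.mulVec_neg, add_zero, zero_add, smul_eq_mul,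
    Sum.elim_comp_inl, Sum.elim_comp_inr] at *
  have hmin1 : min ε₁ ε₂ ≤ ε₁ := min_le_left _ _
  have hmin2 : min ε₁ ε₂ ≤ ε₂ := min_le_right _ _
  simp only [htr] at *
  nlinarith [mul_le_mul_of_nonneg_right hmin1 hx1, mul_le_mul_of_nonneg_right hmin2 hx2]
end

section
/- Differential dominance implies incremental dominance for smooth vector fields: let f : ℝ^n → ℝ^n be continuously differentiable, P ∈ ℝ^{n×n} symmetric, γ ≥ 0 and ε ≥ 0, and suppose that for every x ∈ ℝ^n the linear matrix inequality ∂f(x)ᵀ P + P ∂f(x) + 2γP + εI ⪯ 0 holds, where ∂f(x) is the Jacobian of f at x. Then for every x₁, x₂ ∈ ℝ^n, 2 (x₁ − x₂)ᵀ P (f(x₁) − f(x₂)) + 2γ (x₁ − x₂)ᵀ P (x₁ − x₂) + ε ‖x₁ − x₂‖² ≤ 0. -/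
open Matrix

/-- The Jacobian matrix of `f : ℝⁿ → ℝⁿ` at `x`. -/
noncomputable def jacobianMatrix (n : ℕ) (f : (Fin n → ℝ) → (Fin n → ℝ))
    (x : Fin n → ℝ) : Matrix (Fin n) (Fin n) ℝ :=
  Matrix.of fun i j => fderiv ℝ f x (Pi.single j 1) i

lemma jac_mulVec (n : ℕ) (f : (Fin n → ℝ) → (Fin n → ℝ)) (x v : Fin n → ℝ) :
    (jacobianMatrix n f x) *ᵥ v = fderiv ℝ f x v := by
  have hv : v = ∑ j, (v j) • (Pi.single j (1:ℝ) : Fin n → ℝ) := by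
    funext i
    simp [Pi.single_apply, Finset.sum_apply]
  funext i
  conv_rhs => rw [hv]
  rw [map_sum]
  simp [jacobianMatrix, mulVec, dotProduct, Finset.sum_apply, mul_comm]

lemma lmi_pointwise (n : ℕ) (A P : Matrix (Fin n) (Fin n) ℝ) (hPsymm : P.IsSymm)
    (γ ε : ℝ)
    (h : (-(Aᵀ * P + P * A + (2 * γ) • P + ε • 1)).PosSemidef)
    (v : Fin n → ℝ) :
    2 * (v ⬝ᵥ P *ᵥ (A *ᵥ v)) + 2 * γ * (v ⬝ᵥ P *ᵥ v) + ε * (v ⬝ᵥ v) ≤ 0 := by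
  have h0 := h.dotProduct_mulVec_nonneg v
  have hstar : (star v : Fin n → ℝ) = v := by simp
  rw [hstar] at h0
  have hAtP : v ⬝ᵥ (Aᵀ * P) *ᵥ v = v ⬝ᵥ P *ᵥ (A *ᵥ v) := by
    calc v ⬝ᵥ (Aᵀ * P) *ᵥ v = (v ᵥ* Aᵀ) ⬝ᵥ (P *ᵥ v) := by
          rw [← mulVec_mulVec, dotProduct_mulVec]
      _ = (A *ᵥ v) ⬝ᵥ (P *ᵥ v) := by rw [vecMul_transpose]
      _ = (P *ᵥ v) ⬝ᵥ (A *ᵥ v) := dotProduct_comm _ _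
      _ = (v ᵥ* P) ⬝ᵥ (A *ᵥ v) := by rw [← mulVec_transpose, hPsymm.eq]
      _ = v ⬝ᵥ P *ᵥ (A *ᵥ v) := (dotProduct_mulVec _ _ _).symm
  have hPA : v ⬝ᵥ (P * A) *ᵥ v = v ⬝ᵥ P *ᵥ (A *ᵥ v) := by
    rw [← mulVec_mulVec]
  rw [neg_mulVec, dotProduct_neg, add_mulVec, add_mulVec, add_mulVec,
      dotProduct_add, dotProduct_add, dotProduct_add, smul_mulVec,
      smul_mulVec, one_mulVec, dotProduct_smul, dotProduct_smul] at h0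
  rw [hAtP, hPA] at h0
  simp only [smul_eq_mul] at h0
  nlinarith [h0]


/-- Differential dominance implies incremental dominance for smooth vector
fields: if `∂f(x)ᵀP + P∂f(x) + 2γP + εI ⪯ 0` at every point `x`, then
`2 Δxᵀ P (f(x₁) − f(x₂)) + 2γ Δxᵀ P Δx + ε‖Δx‖² ≤ 0` for every `x₁, x₂`,
where `Δx = x₁ − x₂`. -/
theorem differential_dominance_implies_incremental
    (n : ℕ) (f : (Fin n → ℝ) → (Fin n → ℝ)) (hf : ContDiff ℝ 1 f)
    (P : Matrix (Fin n) (Fin n) ℝ) (hPsymm : P.IsSymm)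
    (γ ε : ℝ) (hγ : 0 ≤ γ) (hε : 0 ≤ ε)
    (hLMI : ∀ x : Fin n → ℝ,
      (-((jacobianMatrix n f x)ᵀ * P + P * jacobianMatrix n f x +
          (2 * γ) • P + ε • 1)).PosSemidef) :
    ∀ x₁ x₂ : Fin n → ℝ,
      2 * ((x₁ - x₂) ⬝ᵥ P.mulVec (f x₁ - f x₂)) +
        2 * γ * ((x₁ - x₂) ⬝ᵥ P.mulVec (x₁ - x₂)) +
        ε * ((x₁ - x₂) ⬝ᵥ (x₁ - x₂)) ≤ 0 := by
  intro x₁ x₂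
  set v : Fin n → ℝ := x₁ - x₂ with hv
  set C : ℝ := 2 * γ * (v ⬝ᵥ P *ᵥ v) + ε * (v ⬝ᵥ v) with hC
  -- continuous linear functional w ↦ v ⬝ᵥ P *ᵥ w
  let L : (Fin n → ℝ) →ₗ[ℝ] ℝ :=
    { toFun := fun w => v ⬝ᵥ P *ᵥ w
      map_add' := fun a b => by simp [mulVec_add, dotProduct_add]
      map_smul' := fun c a => by simp [mulVec_smul, dotProduct_smul] }
  let Lc : (Fin n → ℝ) →L[ℝ] ℝ := L.toContinuousLinearMap
  set φ : ℝ → ℝ := fun t => 2 * Lc (f (x₂ + t • v)) + C * t with hφdef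
  have hφ : ∀ t : ℝ, HasDerivAt φ
      (2 * (v ⬝ᵥ P *ᵥ (fderiv ℝ f (x₂ + t • v) v)) + C) t := by
    intro t
    have hg : HasDerivAt (fun t : ℝ => x₂ + t • v) v t := by
      simpa using ((hasDerivAt_id t).smul_const v).const_add x₂
    have hff : HasFDerivAt f (fderiv ℝ f (x₂ + t • v)) (x₂ + t • v) :=
      ((hf.differentiable one_ne_zero) (x₂ + t • v)).hasFDerivAt
    have hcomp : HasDerivAt (fun t : ℝ => f (x₂ + t • v))
        (fderiv ℝ f (x₂ + t • v) v) t := hff.comp_hasDerivAt t hg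
    have hL : HasDerivAt (fun t : ℝ => Lc (f (x₂ + t • v)))
        (Lc (fderiv ℝ f (x₂ + t • v) v)) t :=
      Lc.hasFDerivAt.comp_hasDerivAt t hcomp
    have := (hL.const_mul 2).add ((hasDerivAt_id t).const_mul C)
    exact this.congr_deriv (by rw [mul_one]; rfl)
  have hderiv_nonpos : ∀ t : ℝ,
      2 * (v ⬝ᵥ P *ᵥ (fderiv ℝ f (x₂ + t • v) v)) + C ≤ 0 := by
    intro t
    have := lmi_pointwise n (jacobianMatrix n f (x₂ + t • v)) P hPsymm γ ε
      (hLMI (x₂ + t • v)) v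
    rw [jac_mulVec] at this
    rw [hC]; linarith
  have hdiff : Differentiable ℝ φ := fun t => (hφ t).differentiableAt
  have hant : AntitoneOn φ (Set.Icc 0 1) := by
    apply antitoneOn_of_deriv_nonpos (convex_Icc (0:ℝ) 1)
      hdiff.continuous.continuousOn hdiff.differentiableOn
    intro t _
    rw [(hφ t).deriv]
    exact hderiv_nonpos t
  have h01 : φ 1 ≤ φ 0 := hant (Set.left_mem_Icc.2 zero_le_one)
    (Set.right_mem_Icc.2 zero_le_one) zero_le_one
  have hx1 : x₂ + (1:ℝ) • v = x₁ := by rw [hv]; simp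
  have hx0 : x₂ + (0:ℝ) • v = x₂ := by simp
  have hLcdef : ∀ w, Lc w = v ⬝ᵥ P *ᵥ w := fun w => rfl
  rw [hφdef] at h01
  simp only [hx1, hx0, hLcdef, mul_one, mul_zero, add_zero] at h01
  have hsub : v ⬝ᵥ P *ᵥ (f x₁ - f x₂) =
      v ⬝ᵥ P *ᵥ f x₁ - v ⬝ᵥ P *ᵥ f x₂ := by
    rw [mulVec_sub, dotProduct_sub]
  rw [hsub, hC] at *
  linarith
end

section
/- The saturated op-amp model is strictly 0-passive: let R_a, C_a, α, E₁, E₂ be positive reals and let 0 ≤ γ < 1/(R_a C_a). Then there exist p > 0 and ε > 0 such that for all (x, I) and (x′, I′) in the saturation relation S(E₁, E₂) and all v, v′ ∈ ℝ, setting Δx = x − x′, ΔI = I − I′, Δv = v − v′, and Δẋ = −Δx/(R_a C_a) + (α/C_a)Δv − (1/C_a)ΔI, one has 2 p Δẋ Δx + 2γ p Δx² + ε Δx² ≤ 2 Δx Δv. -/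
/-- The saturation relation
`S(E₁,E₂) = {(v,i) : (v = E₁ ∧ i ≥ 0) ∨ (−E₂ < v < E₁ ∧ i = 0) ∨ (v = −E₂ ∧ i ≤ 0)}`. -/
def satRel (E₁ E₂ : ℝ) : Set (ℝ × ℝ) :=
  {p | (p.1 = E₁ ∧ 0 ≤ p.2) ∨ (-E₂ < p.1 ∧ p.1 < E₁ ∧ p.2 = 0) ∨ (p.1 = -E₂ ∧ p.2 ≤ 0)}

lemma satRel_mono {E₁ E₂ x I x' I' : ℝ} (hE : -E₂ < E₁)
    (h : (x, I) ∈ satRel E₁ E₂) (h' : (x', I') ∈ satRel E₁ E₂) :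
    0 ≤ (I - I') * (x - x') := by
  simp only [satRel, Set.mem_setOf_eq] at h h'
  rcases h with ⟨hx, hI⟩ | ⟨hx1, hx2, hI⟩ | ⟨hx, hI⟩ <;>
    rcases h' with ⟨hx', hI'⟩ | ⟨hx1', hx2', hI'⟩ | ⟨hx', hI'⟩ <;>
    subst_vars <;> nlinarith

/-- The saturated op-amp model is strictly 0-passive: for every rate
`0 ≤ γ < 1/(R_a C_a)` there exist a positive storage coefficient `p` and
`ε > 0` such that the incremental dissipation inequality
`2 p Δẋ Δx + 2γp Δx² + ε Δx² ≤ 2 Δx Δv` holds along the increments of the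
op-amp dynamics. -/
theorem opamp_strictly_zero_passive
    (Ra Ca α E₁ E₂ γ : ℝ)
    (hRa : 0 < Ra) (hCa : 0 < Ca) (hα : 0 < α) (hE₁ : 0 < E₁) (hE₂ : 0 < E₂)
    (hγ₀ : 0 ≤ γ) (hγ₁ : γ < 1 / (Ra * Ca)) :
    ∃ p > (0:ℝ), ∃ ε > (0:ℝ),
      ∀ x I x' I' v v' : ℝ,
        (x, I) ∈ satRel E₁ E₂ → (x', I') ∈ satRel E₁ E₂ →
        2 * p * (-(x - x') / (Ra * Ca) + (α / Ca) * (v - v') - (1 / Ca) * (I - I')) * (x - x') +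
          2 * γ * p * (x - x') ^ 2 + ε * (x - x') ^ 2 ≤
        2 * (x - x') * (v - v') := by
  have hE : -E₂ < E₁ := by linarith
  have h1 : γ * (Ra * Ca) < 1 := by
    rw [lt_div_iff₀ (by positivity)] at hγ₁; linarith
  have hkey : 0 < 1 / Ra - γ * Ca := by
    rw [sub_pos, lt_div_iff₀ hRa]; nlinarith
  refine ⟨Ca / α, by positivity, (1 / Ra - γ * Ca) / α, by positivity, ?_⟩
  intro x I x' I' v v' h h'
  have hmono := satRel_mono hE h h'
  have hid :
      2 * (Ca / α) * (-(x - x') / (Ra * Ca) + (α / Ca) * (v - v') - (1 / Ca) * (I - I')) * (x - x') +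
          2 * γ * (Ca / α) * (x - x') ^ 2 + (1 / Ra - γ * Ca) / α * (x - x') ^ 2 =
        2 * (x - x') * (v - v') - (1 / Ra - γ * Ca) / α * (x - x') ^ 2
          - (2 / α) * ((I - I') * (x - x')) := by
    field_simp
    ring
  rw [hid]
  have h2 : 0 ≤ (1 / Ra - γ * Ca) / α * (x - x') ^ 2 := by positivity
  have h3 : 0 ≤ (2 / α) * ((I - I') * (x - x')) := by positivity
  linarith
end

section
/- A slow first-order lag is strictly 1-passive: let a₁ > 0, b₁ > 0 and γ > b₁. Then there exist p < 0 and ε > 0 such that for all x, x′, u, u′ ∈ ℝ, setting Δx = x − x′, Δu = u − u′, Δẋ = −b₁ Δx + a₁ Δu, and Δy = −Δx, one has 2 p Δẋ Δx + 2γ p Δx² + ε Δx² ≤ 2 Δy Δu. -/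
/-- A slow first-order lag is strictly 1-passive: if `a₁ > 0`, `b₁ > 0` and
`γ > b₁`, then there exist a negative storage coefficient `p` and `ε > 0`
such that `2 p Δẋ Δx + 2γp Δx² + ε Δx² ≤ 2 Δy Δu` along increments of
`ẋ = −b₁ x + a₁ u`, `y = −x`. -/
theorem first_order_lag_strictly_one_passive
    (a₁ b₁ γ : ℝ) (ha₁ : 0 < a₁) (hb₁ : 0 < b₁) (hγ : b₁ < γ) :
    ∃ p < (0:ℝ), ∃ ε > (0:ℝ),
      ∀ x x' u u' : ℝ,
        2 * p * (-b₁ * (x - x') + a₁ * (u - u')) * (x - x') +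
          2 * γ * p * (x - x') ^ 2 + ε * (x - x') ^ 2 ≤
        2 * (-(x - x')) * (u - u') := by
  refine ⟨-1/a₁, div_neg_of_neg_of_pos (by norm_num) ha₁,
    (γ - b₁)/a₁, div_pos (sub_pos.mpr hγ) ha₁, ?_⟩
  intro x x' u u'
  have key :
      2 * (-1/a₁) * (-b₁ * (x - x') + a₁ * (u - u')) * (x - x') +
        2 * γ * (-1/a₁) * (x - x') ^ 2 + ((γ - b₁)/a₁) * (x - x') ^ 2
        - 2 * (-(x - x')) * (u - u') = (b₁ - γ)/a₁ * (x - x')^2 := by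
    field_simp
    ring
  have hnp : (b₁ - γ)/a₁ * (x - x')^2 ≤ 0 :=
    mul_nonpos_of_nonpos_of_nonneg
      (div_nonpos_of_nonpos_of_nonneg (by linarith) ha₁.le) (sq_nonneg _)
  linarith
end

section
/- The Schmitt trigger is strictly 1-dominant: let R_a, C_a, R₁, R₂, C₁, α, E₁, E₂ be positive reals, set b₁ = (R₁ + R₂)/(R₁ R₂ C₁) and a₁ = 1/(R₂ C₁), and assume b₁ < 1/(R_a C_a). Then there exist γ with b₁ < γ < 1/(R_a C_a), a symmetric matrix P ∈ ℝ^{2×2} with exactly one negative and one positive eigenvalue, and ε > 0 such that for all (x_a, x₁, I) and (x_a′, x₁′, I′) with (x_a, I) ∈ S(E₁, E₂) and (x_a′, I′) ∈ S(E₁, E₂), setting Δx = (x_a − x_a′, x₁ − x₁′), ΔI = I − I′, and Δẋ = (−(x_a − x_a′)/(R_a C_a) + (α/C_a)(x₁ − x₁′) − (1/C_a)ΔI, −b₁(x₁ − x₁′) + a₁(x_a − x_a′)), one has 2 Δẋᵀ P Δx + Δxᵀ(2γP + εI)Δx ≤ 0. -/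
open Matrix

/-- The saturation relation is incrementally monotone. -/
lemma satRel_incremental_monotone {E₁ E₂ v i v' i' : ℝ} (hE₁ : 0 < E₁) (hE₂ : 0 < E₂)
    (h : (v, i) ∈ satRel E₁ E₂) (h' : (v', i') ∈ satRel E₁ E₂) :
    0 ≤ (v - v') * (i - i') := by
  rcases h with ⟨hv, hi⟩ | ⟨h1, h2, hi⟩ | ⟨hv, hi⟩ <;>
    rcases h' with ⟨hv', hi'⟩ | ⟨h1', h2', hi'⟩ | ⟨hv', hi'⟩ <;>
    subst_vars <;> nlinarith

/-- Counting lemma for a sign-split pair of values. -/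
lemma count_one_neg_one_pos (f : Fin 2 → ℝ)
    (h : (f 0 < 0 ∧ 0 < f 1) ∨ (0 < f 0 ∧ f 1 < 0)) :
    (Finset.univ.filter fun i => f i < 0).card = 1 ∧
    (Finset.univ.filter fun i => 0 < f i).card = 1 := by
  rcases h with ⟨h0, h1⟩ | ⟨h0, h1⟩ <;> constructor <;>
    · rw [Finset.card_filter, Fin.sum_univ_two]
      simp [h0, h1, asymm h0, asymm h1]

/-- The key incremental quadratic inequality for the Schmitt trigger. -/
lemma schmitt_key_ineq (Ra Ca α b₁ a₁ γ q ε xa x₁ I xa' x₁' I' : ℝ)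
    (hCa : 0 < Ca)
    (hqa : q * a₁ = α / Ca)
    (hε₁ : ε ≤ 2 * (1 / (Ra * Ca) - γ)) (hε₂ : ε ≤ 2 * q * (γ - b₁))
    (hmono : 0 ≤ (xa - xa') * (I - I')) :
    2 * (![-(xa - xa') / (Ra * Ca) + (α / Ca) * (x₁ - x₁') - (1 / Ca) * (I - I'),
           -b₁ * (x₁ - x₁') + a₁ * (xa - xa')] ⬝ᵥ
         (!![1, 0; 0, -q] : Matrix (Fin 2) (Fin 2) ℝ).mulVec ![xa - xa', x₁ - x₁']) +
      ![xa - xa', x₁ - x₁'] ⬝ᵥ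
        ((2 * γ) • (!![1, 0; 0, -q] : Matrix (Fin 2) (Fin 2) ℝ) + ε • 1).mulVec
          ![xa - xa', x₁ - x₁'] ≤ 0 := by
  simp only [Matrix.mulVec, dotProduct, Fin.sum_univ_two, Matrix.add_apply,
    Matrix.smul_apply, Matrix.one_apply, Matrix.cons_val', Matrix.cons_val_zero,
    Matrix.cons_val_one, Matrix.head_cons, Matrix.head_fin_const, Matrix.empty_val',
    Matrix.cons_val_fin_one, smul_eq_mul, Matrix.of_apply, Fin.zero_eq_one_iff,
    Fin.one_eq_zero_iff, if_true, if_false, Ne, OfNat.ofNat_ne_one, not_false_iff]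
  norm_num
  set u := xa - xa' with hu
  set w := x₁ - x₁' with hw
  set d := I - I' with hdd
  clear_value u w d
  have hd : (xa' - xa) / (Ra * Ca) = -((1 / (Ra * Ca)) * u) := by rw [hu]; ring
  rw [hd]
  set lam := 1 / (Ra * Ca) with hlam
  clear_value lam
  have h1 : 0 ≤ (2 * (lam - γ) - ε) * (u * u) := by nlinarith [mul_self_nonneg u]
  have h2 : 0 ≤ (2 * q * (γ - b₁) - ε) * (w * w) := by nlinarith [mul_self_nonneg w]
  have h3 : 0 ≤ (2 * Ca⁻¹) * (u * d) := by positivity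
  have hcross : (α / Ca) * (u * w) = (q * a₁) * (u * w) := by rw [hqa]
  nlinarith [h1, h2, h3, hcross]

/-- The Schmitt trigger is strictly 1-dominant. -/
theorem schmitt_trigger_strictly_one_dominant
    (Ra Ca R₁ R₂ C₁ α E₁ E₂ : ℝ)
    (hRa : 0 < Ra) (hCa : 0 < Ca) (hR₁ : 0 < R₁) (hR₂ : 0 < R₂) (hC₁ : 0 < C₁)
    (hα : 0 < α) (hE₁ : 0 < E₁) (hE₂ : 0 < E₂)
    (b₁ a₁ : ℝ) (hb₁ : b₁ = (R₁ + R₂) / (R₁ * R₂ * C₁)) (ha₁ : a₁ = 1 / (R₂ * C₁))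
    (hslow : b₁ < 1 / (Ra * Ca)) :
    ∃ γ : ℝ, b₁ < γ ∧ γ < 1 / (Ra * Ca) ∧
    ∃ P : Matrix (Fin 2) (Fin 2) ℝ, ∃ hP : P.IsHermitian,
      (Finset.univ.filter fun i => hP.eigenvalues i < 0).card = 1 ∧
      (Finset.univ.filter fun i => 0 < hP.eigenvalues i).card = 1 ∧
    ∃ ε > (0:ℝ),
      ∀ xa x₁ I xa' x₁' I' : ℝ,
        (xa, I) ∈ satRel E₁ E₂ → (xa', I') ∈ satRel E₁ E₂ →
        2 * (![-(xa - xa') / (Ra * Ca) + (α / Ca) * (x₁ - x₁') - (1 / Ca) * (I - I'),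
               -b₁ * (x₁ - x₁') + a₁ * (xa - xa')] ⬝ᵥ
             P.mulVec ![xa - xa', x₁ - x₁']) +
          ![xa - xa', x₁ - x₁'] ⬝ᵥ
            ((2 * γ) • P + ε • 1).mulVec ![xa - xa', x₁ - x₁'] ≤ 0 := by
  have ha₁pos : 0 < a₁ := by rw [ha₁]; positivity
  have hlampos : 0 < 1 / (Ra * Ca) := by positivity
  obtain ⟨γ, hγ₁, hγ₂⟩ : ∃ γ : ℝ, b₁ < γ ∧ γ < 1 / (Ra * Ca) :=
    ⟨(b₁ + 1 / (Ra * Ca)) / 2, by linarith, by linarith⟩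
  refine ⟨γ, hγ₁, hγ₂, ?_⟩
  obtain ⟨q, hqpos, hqa⟩ : ∃ q : ℝ, 0 < q ∧ q * a₁ = α / Ca :=
    ⟨α / (Ca * a₁), by positivity, by field_simp⟩
  have hHerm : (!![1, 0; 0, -q] : Matrix (Fin 2) (Fin 2) ℝ).IsHermitian := by
    ext i j
    fin_cases i <;> fin_cases j <;> simp [Matrix.conjTranspose_apply]
  have hdet : hHerm.eigenvalues 0 * hHerm.eigenvalues 1 = -q := by
    have h := hHerm.det_eq_prod_eigenvalues
    rw [Fin.prod_univ_two] at h
    have hd : (!![1, 0; 0, -q] : Matrix (Fin 2) (Fin 2) ℝ).det = -q := by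
      rw [Matrix.det_fin_two_of]; ring
    rw [hd] at h
    exact_mod_cast h.symm
  have h01 : (hHerm.eigenvalues 0 < 0 ∧ 0 < hHerm.eigenvalues 1) ∨
      (0 < hHerm.eigenvalues 0 ∧ hHerm.eigenvalues 1 < 0) := by
    rcases lt_trichotomy (hHerm.eigenvalues 0) 0 with h0 | h0 | h0
    · left; exact ⟨h0, by nlinarith⟩
    · exfalso; rw [h0] at hdet; nlinarith
    · right; exact ⟨h0, by nlinarith⟩
  obtain ⟨hc1, hc2⟩ := count_one_neg_one_pos _ h01
  refine ⟨!![1, 0; 0, -q], hHerm, hc1, hc2, ?_⟩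
  obtain ⟨ε, hεpos, hε₁, hε₂⟩ :
      ∃ ε : ℝ, 0 < ε ∧ ε ≤ 2 * (1 / (Ra * Ca) - γ) ∧ ε ≤ 2 * q * (γ - b₁) :=
    ⟨min (2 * (1 / (Ra * Ca) - γ)) (2 * q * (γ - b₁)),
      lt_min (by linarith) (by nlinarith), min_le_left _ _, min_le_right _ _⟩
  refine ⟨ε, hεpos, ?_⟩
  intro xa x₁ I xa' x₁' I' hm hm'
  exact schmitt_key_ineq Ra Ca α b₁ a₁ γ q ε xa x₁ I xa' x₁' I' hCa hqa hε₁ hε₂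
    (satRel_incremental_monotone hE₁ hE₂ hm hm')
end

section
/- Positive realness of the shifted mixed-feedback transfer function: let a₁, a₂, b₁, b₂, γ be real numbers with (b₁ − γ)(b₂ − γ) > 0, a₂(b₂ − γ) − a₁(b₁ − γ) > 0, and a₂(b₁ − γ) − a₁(b₂ − γ) > 0. Define G : ℂ → ℂ by G(s) = ((a₂ − a₁) s + a₂ b₁ − a₁ b₂) / ((s + b₁)(s + b₂)). Then for every ω ∈ ℝ, (iω − γ + b₁)(iω − γ + b₂) ≠ 0 and Re G(iω − γ) > 0. -/
/-- Positive realness of the shifted mixed-feedback transfer function: if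
`(b₁ − γ)(b₂ − γ) > 0`, `a₂(b₂ − γ) − a₁(b₁ − γ) > 0` and
`a₂(b₁ − γ) − a₁(b₂ − γ) > 0`, then for
`G(s) = ((a₂ − a₁)s + a₂b₁ − a₁b₂)/((s + b₁)(s + b₂))` and every `ω ∈ ℝ`,
the shifted denominator is nonzero and `Re G(iω − γ) > 0`. -/
theorem shifted_transfer_function_positive_real
    (a₁ a₂ b₁ b₂ γ : ℝ)
    (h₀ : 0 < (b₁ - γ) * (b₂ - γ))
    (h₁ : 0 < a₂ * (b₂ - γ) - a₁ * (b₁ - γ))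
    (h₂ : 0 < a₂ * (b₁ - γ) - a₁ * (b₂ - γ))
    (G : ℂ → ℂ)
    (hG : ∀ s : ℂ, G s = (((a₂ : ℂ) - a₁) * s + ((a₂ : ℂ) * b₁ - a₁ * b₂)) /
      ((s + b₁) * (s + b₂))) :
    ∀ ω : ℝ,
      ((ω : ℂ) * Complex.I - γ + b₁) * ((ω : ℂ) * Complex.I - γ + b₂) ≠ 0 ∧
      0 < (G ((ω : ℂ) * Complex.I - γ)).re := by
  intro ω
  have hβ₁ : b₁ - γ ≠ 0 := by
    intro h; rw [h, zero_mul] at h₀; exact lt_irrefl 0 h₀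
  have hβ₂ : b₂ - γ ≠ 0 := by
    intro h; rw [h, mul_zero] at h₀; exact lt_irrefl 0 h₀
  have hD1 : ((ω : ℂ) * Complex.I - γ + b₁) ≠ 0 := by
    intro h
    have := congrArg Complex.re h
    simp [Complex.add_re, Complex.sub_re, Complex.mul_re] at this
    exact hβ₁ (by linarith)
  have hD2 : ((ω : ℂ) * Complex.I - γ + b₂) ≠ 0 := by
    intro h
    have := congrArg Complex.re h
    simp [Complex.add_re, Complex.sub_re, Complex.mul_re] at this
    exact hβ₂ (by linarith)
  have hD : ((ω : ℂ) * Complex.I - γ + b₁) * ((ω : ℂ) * Complex.I - γ + b₂) ≠ 0 :=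
    mul_ne_zero hD1 hD2
  refine ⟨hD, ?_⟩
  rw [hG]
  have hnorm : 0 < Complex.normSq (((ω : ℂ) * Complex.I - γ + b₁) * ((ω : ℂ) * Complex.I - γ + b₂)) :=
    Complex.normSq_pos.mpr hD
  rw [Complex.div_re]
  have hnum : 0 < ((((a₂ : ℂ) - a₁) * ((ω : ℂ) * Complex.I - γ) + ((a₂ : ℂ) * b₁ - a₁ * b₂)).re *
      ((((ω : ℂ) * Complex.I - γ) + b₁) * (((ω : ℂ) * Complex.I - γ) + b₂)).re +
      (((a₂ : ℂ) - a₁) * ((ω : ℂ) * Complex.I - γ) + ((a₂ : ℂ) * b₁ - a₁ * b₂)).im *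
      ((((ω : ℂ) * Complex.I - γ) + b₁) * (((ω : ℂ) * Complex.I - γ) + b₂)).im) := by
    simp [Complex.add_re, Complex.add_im, Complex.sub_re, Complex.sub_im,
      Complex.mul_re, Complex.mul_im]
    nlinarith [sq_nonneg ω, mul_pos h₀ h₂, mul_nonneg (le_of_lt h₁) (sq_nonneg ω)]
  rw [← add_div]; exact div_pos hnum hnorm
end

section
/- Parameter regime for 0-passivity of the mixed-feedback network: let a₁ > 0, a₂ > 0, b₁ > 0, b₂ > 0 and let γ satisfy 0 < γ < min{b₁, b₂} and a₂/a₁ > max{(b₁ − γ)/(b₂ − γ), (b₂ − γ)/(b₁ − γ)}. Define G : ℂ → ℂ by G(s) = ((a₂ − a₁) s + a₂ b₁ − a₁ b₂)/((s + b₁)(s + b₂)). Then for every ω ∈ ℝ, Re G(iω − γ) > 0. -/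
/-- Parameter regime for 0-passivity of the mixed-feedback network: if
`a₁, a₂, b₁, b₂ > 0`, `0 < γ < min{b₁, b₂}` and
`a₂/a₁ > max{(b₁ − γ)/(b₂ − γ), (b₂ − γ)/(b₁ − γ)}`, then for
`G(s) = ((a₂ − a₁)s + a₂b₁ − a₁b₂)/((s + b₁)(s + b₂))` and every `ω ∈ ℝ`,
`Re G(iω − γ) > 0`. -/
theorem mixed_feedback_zero_passive_regime
    (a₁ a₂ b₁ b₂ γ : ℝ)
    (ha₁ : 0 < a₁) (ha₂ : 0 < a₂) (hb₁ : 0 < b₁) (hb₂ : 0 < b₂)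
    (hγ₀ : 0 < γ) (hγ₁ : γ < min b₁ b₂)
    (hratio : max ((b₁ - γ) / (b₂ - γ)) ((b₂ - γ) / (b₁ - γ)) < a₂ / a₁)
    (G : ℂ → ℂ)
    (hG : ∀ s : ℂ, G s = (((a₂ : ℂ) - a₁) * s + ((a₂ : ℂ) * b₁ - a₁ * b₂)) /
      ((s + b₁) * (s + b₂))) :
    ∀ ω : ℝ, 0 < (G ((ω : ℂ) * Complex.I - γ)).re := by
  intro ω
  have hβ₁ : 0 < b₁ - γ := sub_pos.2 ((lt_min_iff.1 hγ₁).1)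
  have hβ₂ : 0 < b₂ - γ := sub_pos.2 ((lt_min_iff.1 hγ₁).2)
  have h1 : a₁ * (b₂ - γ) < a₂ * (b₁ - γ) := by
    have := lt_of_le_of_lt (le_max_right _ _) hratio
    rw [div_lt_div_iff₀ hβ₁ ha₁] at this
    linarith
  have h2 : a₁ * (b₁ - γ) < a₂ * (b₂ - γ) := by
    have := lt_of_le_of_lt (le_max_left _ _) hratio
    rw [div_lt_div_iff₀ hβ₂ ha₁] at this
    linarith
  rw [hG, Complex.div_re, ← add_div]
  have hns : 0 < Complex.normSq ((((ω : ℂ) * Complex.I - γ) + b₁) * (((ω : ℂ) * Complex.I - γ) + b₂)) := by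
    apply Complex.normSq_pos.2
    apply mul_ne_zero <;>
    · intro h
      have := congrArg Complex.re h
      simp at this
      linarith
  apply div_pos _ hns
  have hnum : ((((a₂ : ℂ) - a₁) * ((ω : ℂ) * Complex.I - γ) + ((a₂ : ℂ) * b₁ - a₁ * b₂)).re *
      ((((ω : ℂ) * Complex.I - γ) + b₁) * (((ω : ℂ) * Complex.I - γ) + b₂)).re +
      (((a₂ : ℂ) - a₁) * ((ω : ℂ) * Complex.I - γ) + ((a₂ : ℂ) * b₁ - a₁ * b₂)).im *
      ((((ω : ℂ) * Complex.I - γ) + b₁) * (((ω : ℂ) * Complex.I - γ) + b₂)).im)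
      = (b₁ - γ) * (b₂ - γ) * (a₂ * (b₁ - γ) - a₁ * (b₂ - γ)) +
        ω ^ 2 * (a₂ * (b₂ - γ) - a₁ * (b₁ - γ)) := by
    simp [Complex.add_re, Complex.add_im, Complex.mul_re, Complex.mul_im, Complex.sub_re,
      Complex.sub_im]
    ring
  rw [hnum]
  have hω : 0 ≤ ω ^ 2 := sq_nonneg ω
  nlinarith [mul_pos hβ₁ hβ₂]
end
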